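/- arXiv:1405.7608 — 2 statements merged into one kernel-verified Lean document; each statement's English description precedes it below -/
import Mathlib

section
/- The set of convolution products { z_1^{j_0}·z_p^{j_1}·⋯·z_{p^{n-1}}^{j_{n-1}} : 0 ≤ j_s ≤ p-1 for all 0 ≤ s ≤ n-1 } is a K-basis of H; in particular, the elements z_{p^s}, 0 ≤ s ≤ n-1, generate H as a K-algebra. -/
open Polynomial TensorProduct

noncomputable section

/-- The truncated polynomial algebra `K[t]/(t^{p^n})`, underlying the Hopf algebra
`H_{n,r,f}`. -/
abbrev TruncAlg (K : Type) [Field K] (p n : ℕ) : Type :=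
  AdjoinRoot (X ^ p ^ n : K[X])

/-- `t`, the image of `X` in `K[t]/(t^{p^n})`. -/
def tgen (K : Type) [Field K] (p n : ℕ) : TruncAlg K p n :=
  AdjoinRoot.root _

/-- The basis `1, t, t^2, …, t^{p^n-1}` of `K[t]/(t^{p^n})`. -/
def tbasis (K : Type) [Field K] (p n : ℕ) :
    Module.Basis (Fin (p ^ n)) K (TruncAlg K p n) :=
  (AdjoinRoot.powerBasis (f := (X ^ p ^ n : K[X]))
    (pow_ne_zero _ Polynomial.X_ne_zero)).basis.reindex
    (finCongr (by simp))

/-- The dual basis functional `z_j ∈ H = H_{n,r,f}^*`, with `z_j (t^i) = δ_{ij}`;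
junk value `0` out of range. -/
def zdual (K : Type) [Field K] (p n : ℕ) (j : ℕ) :
    Module.Dual K (TruncAlg K p n) :=
  if h : j < p ^ n then (tbasis K p n).coord ⟨j, h⟩ else 0

/-- The coefficient `1/(ℓ!(p-ℓ)!)`, computed in the prime field of `K`. -/
def pfCoeff (K : Type) [Field K] (p ℓ : ℕ) : K :=
  ((ℓ.factorial * (p - ℓ).factorial : ℕ) : K)⁻¹

/-- The element `Δ(t) = t⊗1 + 1⊗t + f Σ_{ℓ=1}^{p-1} (1/(ℓ!(p-ℓ)!)) t^{p^r ℓ} ⊗ t^{p^r (p-ℓ)}`. -/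
def Delta_t (K : Type) [Field K] (p n r : ℕ) (f : K) :
    TruncAlg K p n ⊗[K] TruncAlg K p n :=
  tgen K p n ⊗ₜ 1 + 1 ⊗ₜ tgen K p n +
    f • ∑ ℓ ∈ Finset.Icc 1 (p - 1),
      pfCoeff K p ℓ • ((tgen K p n ^ (p ^ r * ℓ)) ⊗ₜ[K] (tgen K p n ^ (p ^ r * (p - ℓ))))

/-- The comultiplication of `H_{n,r,f}` as a linear map, determined by `Δ(t^i) = Δ(t)^i`
(it is the unique `K`-algebra map with `t ↦ Δ(t)`). -/
def DeltaMap (K : Type) [Field K] (p n r : ℕ) (f : K) :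
    TruncAlg K p n →ₗ[K] TruncAlg K p n ⊗[K] TruncAlg K p n :=
  (tbasis K p n).constr K fun i => (Delta_t K p n r f) ^ (i : ℕ)

/-- Convolution product on `H = (H_{n,r,f})^*`:  `(z * z')(h) = mult ((z ⊗ z')(Δ h))`. -/
def conv (K : Type) [Field K] (p n r : ℕ) (f : K)
    (z z' : Module.Dual K (TruncAlg K p n)) : Module.Dual K (TruncAlg K p n) :=
  (LinearMap.mul' K K) ∘ₗ (TensorProduct.map z z') ∘ₗ DeltaMap K p n r f

/-- Convolution powers; the 0th power is the unit `z_0 = ε` of `H`. -/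
def convPow (K : Type) [Field K] (p n r : ℕ) (f : K)
    (z : Module.Dual K (TruncAlg K p n)) : ℕ → Module.Dual K (TruncAlg K p n)
  | 0 => zdual K p n 0
  | m + 1 => conv K p n r f (convPow K p n r f z m) z

/-- The convolution product `z_1^{j 0} · z_p^{j 1} ⋯ z_{p^{m-1}}^{j (m-1)}` in `H`. -/
def zprod (K : Type) [Field K] (p n r : ℕ) (f : K)
    (j : ℕ → ℕ) : ℕ → Module.Dual K (TruncAlg K p n)
  | 0 => zdual K p n 0
  | m + 1 => conv K p n r f (zprod K p n r f j m)
      (convPow K p n r f (zdual K p n (p ^ m)) (j m))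




section Aux

open scoped Pointwise

variable {K : Type} [Field K] {p n r : ℕ} {f : K}

local notation "tt" => tgen K p n

lemma tgen_pow_dim : (tt) ^ p ^ n = 0 := by
  have h : (tt) ^ p ^ n = AdjoinRoot.mk (X ^ p ^ n : K[X]) (X ^ p ^ n) := by
    rw [tgen, ← AdjoinRoot.mk_X, ← map_pow]
  rw [h, AdjoinRoot.mk_self]

lemma tgen_pow_eq_zero {a : ℕ} (ha : p ^ n ≤ a) : (tt) ^ a = 0 := by
  rw [← Nat.sub_add_cancel ha, pow_add, tgen_pow_dim, mul_zero]

lemma tbasis_apply (i : Fin (p ^ n)) : tbasis K p n i = (tt) ^ (i : ℕ) := by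
  rw [tbasis, Module.Basis.reindex_apply, PowerBasis.basis_eq_pow]
  simp [tgen]

lemma zdual_apply {j : ℕ} (hj : j < p ^ n) {i : ℕ} (hi : i < p ^ n) :
    zdual K p n j ((tt) ^ i) = if i = j then 1 else 0 := by
  rw [zdual, dif_pos hj, ← tbasis_apply ⟨i, hi⟩, Module.Basis.coord_apply, Module.Basis.repr_self,
    Finsupp.single_apply]
  simp [Fin.ext_iff, eq_comm]

/-- `z` vanishes on all `t^a` with `a > A₀`. -/
def Bnd (z : Module.Dual K (TruncAlg K p n)) (A₀ : ℕ) : Prop :=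
  ∀ a : ℕ, A₀ < a → z ((tgen K p n) ^ a) = 0

lemma zdual_bnd {j : ℕ} (hj : j < p ^ n) : Bnd (zdual K p n j) j := by
  intro a ha
  rcases lt_or_ge a (p ^ n) with h | h
  · rw [zdual_apply hj h, if_neg (by omega)]
  · rw [tgen_pow_eq_zero h, map_zero]

/-- generators of the degree filtration -/
def FilSet (K : Type) [Field K] (p n : ℕ) (k : ℕ) :
    Set (TruncAlg K p n ⊗[K] TruncAlg K p n) :=
  {x | ∃ a b : ℕ, k ≤ a + b ∧ x = ((tgen K p n) ^ a) ⊗ₜ[K] ((tgen K p n) ^ b)}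

/-- Degree filtration on `A ⊗ A`. -/
def Fil (K : Type) [Field K] (p n : ℕ) (k : ℕ) :
    Submodule K (TruncAlg K p n ⊗[K] TruncAlg K p n) :=
  Submodule.span K (FilSet K p n k)

lemma tmul_mem_Fil {a b k : ℕ} (h : k ≤ a + b) :
    (((tt) ^ a) ⊗ₜ[K] ((tt) ^ b)) ∈ Fil K p n k :=
  Submodule.subset_span ⟨a, b, h, rfl⟩

lemma Fil_antitone {j k : ℕ} (h : j ≤ k) : Fil K p n k ≤ Fil K p n j :=
  Submodule.span_mono (fun x hx => by
    obtain ⟨a, b, hab, hx⟩ := hx; exact ⟨a, b, le_trans h hab, hx⟩)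

lemma Fil_mul_mem {j k : ℕ} {x y : TruncAlg K p n ⊗[K] TruncAlg K p n}
    (hx : x ∈ Fil K p n j) (hy : y ∈ Fil K p n k) : x * y ∈ Fil K p n (j + k) := by
  have hle : Fil K p n j * Fil K p n k ≤ Fil K p n (j + k) := by
    have hspan : Fil K p n j * Fil K p n k =
        Submodule.span K (FilSet K p n j * FilSet K p n k) :=
      Submodule.span_mul_span K _ _
    rw [hspan, Fil]
    apply Submodule.span_le.2
    rintro z hz
    rw [Set.mem_mul] at hz
    obtain ⟨u, hu, v, hv, rfl⟩ := hz
    obtain ⟨a, b, hab, rfl⟩ := hu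
    obtain ⟨c, d, hcd, rfl⟩ := hv
    apply Submodule.subset_span
    refine ⟨a + c, b + d, by omega, ?_⟩
    rw [Algebra.TensorProduct.tmul_mul_tmul, pow_add, pow_add]
  exact hle (Submodule.mul_mem_mul hx hy)

lemma one_mem_Fil_zero : (1 : TruncAlg K p n ⊗[K] TruncAlg K p n) ∈ Fil K p n 0 := by
  have h : (1 : TruncAlg K p n ⊗[K] TruncAlg K p n) = ((tt) ^ 0) ⊗ₜ[K] ((tt) ^ 0) := by
    simp [Algebra.TensorProduct.one_def]
  rw [h]; exact tmul_mem_Fil (by omega)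

lemma pow_mem_Fil {x : TruncAlg K p n ⊗[K] TruncAlg K p n}
    (hx : x ∈ Fil K p n 1) (i : ℕ) : x ^ i ∈ Fil K p n i := by
  induction i with
  | zero => simpa using one_mem_Fil_zero
  | succ i ih =>
      rw [pow_succ]
      exact Fil_mul_mem (j := i) (k := 1) ih hx

/-- the primitive part of `Δ(t)` -/
def Wel (K : Type) [Field K] (p n : ℕ) : TruncAlg K p n ⊗[K] TruncAlg K p n :=
  (tgen K p n) ⊗ₜ[K] 1 + 1 ⊗ₜ[K] (tgen K p n)

lemma Wel_mem : Wel K p n ∈ Fil K p n 1 := by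
  apply Submodule.add_mem
  · have h : (tt) ⊗ₜ[K] (1 : TruncAlg K p n) = ((tt) ^ 1) ⊗ₜ[K] ((tt) ^ 0) := by simp
    rw [h]; exact tmul_mem_Fil (by omega)
  · have h : (1 : TruncAlg K p n) ⊗ₜ[K] (tt) = ((tt) ^ 0) ⊗ₜ[K] ((tt) ^ 1) := by simp
    rw [h]; exact tmul_mem_Fil (by omega)

lemma Delta_sub_Wel_mem : Delta_t K p n r f - Wel K p n ∈ Fil K p n 2 := by
  have h : Delta_t K p n r f - Wel K p n =
      f • ∑ ℓ ∈ Finset.Icc 1 (p - 1),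
        pfCoeff K p ℓ • (((tt) ^ (p ^ r * ℓ)) ⊗ₜ[K] ((tt) ^ (p ^ r * (p - ℓ)))) := by
    rw [Delta_t, Wel]; ring
  rw [h]
  apply Submodule.smul_mem
  apply Submodule.sum_mem
  intro ℓ hℓ
  apply Submodule.smul_mem
  apply tmul_mem_Fil
  rw [Finset.mem_Icc] at hℓ
  have h1 : 1 ≤ p ^ r := Nat.one_le_pow _ _ (by omega)
  have h2 : 1 * 1 ≤ p ^ r * ℓ := Nat.mul_le_mul h1 hℓ.1
  have h3 : 1 * 1 ≤ p ^ r * (p - ℓ) := Nat.mul_le_mul h1 (by omega)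
  omega

lemma Delta_mem : Delta_t K p n r f ∈ Fil K p n 1 := by
  have h : Delta_t K p n r f = (Delta_t K p n r f - Wel K p n) + Wel K p n := by ring
  rw [h]
  exact Submodule.add_mem _ (Fil_antitone (by omega) Delta_sub_Wel_mem) Wel_mem

lemma Delta_pow_sub_Wel_pow_mem (i : ℕ) :
    Delta_t K p n r f ^ i - Wel K p n ^ i ∈ Fil K p n (i + 1) := by
  induction i with
  | zero => simpa using Submodule.zero_mem (Fil K p n 1)
  | succ i ih =>
      have key : Delta_t K p n r f ^ (i + 1) - Wel K p n ^ (i + 1) =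
          Delta_t K p n r f ^ i * (Delta_t K p n r f - Wel K p n) +
            (Delta_t K p n r f ^ i - Wel K p n ^ i) * Wel K p n := by ring
      rw [key]
      apply Submodule.add_mem
      · exact Fil_mul_mem (j := i) (k := 2) (pow_mem_Fil Delta_mem i) Delta_sub_Wel_mem
      · exact Fil_mul_mem (j := i + 1) (k := 1) ih Wel_mem

/-- the pairing `u ↦ mult ((z ⊗ z') u)` -/
def pairMap (z z' : Module.Dual K (TruncAlg K p n)) :
    (TruncAlg K p n ⊗[K] TruncAlg K p n) →ₗ[K] K :=
  (LinearMap.mul' K K) ∘ₗ (TensorProduct.map z z')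

lemma pairMap_tmul (z z' : Module.Dual K (TruncAlg K p n)) (x y : TruncAlg K p n) :
    pairMap z z' (x ⊗ₜ[K] y) = z x * z' y := by
  simp [pairMap]

lemma conv_apply' (z z' : Module.Dual K (TruncAlg K p n)) (x : TruncAlg K p n) :
    conv K p n r f z z' x = pairMap z z' (DeltaMap K p n r f x) := rfl

lemma pairMap_vanish {z z' : Module.Dual K (TruncAlg K p n)} {A₀ B₀ : ℕ}
    (hz : Bnd z A₀) (hz' : Bnd z' B₀) {u : TruncAlg K p n ⊗[K] TruncAlg K p n}
    (hu : u ∈ Fil K p n (A₀ + B₀ + 1)) : pairMap z z' u = 0 := by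
  have hker : Fil K p n (A₀ + B₀ + 1) ≤ LinearMap.ker (pairMap z z') := by
    rw [Fil]
    apply Submodule.span_le.2
    rintro x ⟨a, b, hab, rfl⟩
    rw [SetLike.mem_coe, LinearMap.mem_ker, pairMap_tmul]
    rcases lt_or_ge A₀ a with h | h
    · rw [hz a h, zero_mul]
    · rw [hz' b (by omega), mul_zero]
  exact LinearMap.mem_ker.1 (hker hu)

lemma pairMap_Wel_pow (z z' : Module.Dual K (TruncAlg K p n)) (i : ℕ) :
    pairMap z z' (Wel K p n ^ i) =
      ∑ a ∈ Finset.range (i + 1),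
        (i.choose a : K) * (z ((tt) ^ a) * z' ((tt) ^ (i - a))) := by
  rw [Wel, add_pow, map_sum]
  apply Finset.sum_congr rfl
  intro a _
  have h1 : ((tt) ⊗ₜ[K] (1 : TruncAlg K p n)) ^ a *
      ((1 : TruncAlg K p n) ⊗ₜ[K] (tt)) ^ (i - a) = ((tt) ^ a) ⊗ₜ[K] ((tt) ^ (i - a)) := by
    rw [Algebra.TensorProduct.tmul_pow, Algebra.TensorProduct.tmul_pow,
      Algebra.TensorProduct.tmul_mul_tmul, one_pow, one_pow, mul_one, one_mul]
  rw [h1, mul_comm, ← nsmul_eq_mul, map_nsmul, pairMap_tmul, nsmul_eq_mul]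

lemma pairMap_Wel_lead {z z' : Module.Dual K (TruncAlg K p n)} {A₀ B₀ : ℕ}
    (hz : Bnd z A₀) (hz' : Bnd z' B₀) :
    pairMap z z' (Wel K p n ^ (A₀ + B₀)) =
      ((A₀ + B₀).choose A₀ : K) * (z ((tt) ^ A₀) * z' ((tt) ^ B₀)) := by
  rw [pairMap_Wel_pow, Finset.sum_eq_single A₀]
  · rw [Nat.add_sub_cancel_left]
  · intro a ha hne
    rw [Finset.mem_range] at ha
    rcases lt_or_ge A₀ a with h | h
    · rw [hz a h]; ring
    · rw [hz' (A₀ + B₀ - a) (by omega)]; ring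
  · intro h
    exact absurd (Finset.mem_range.2 (by omega)) h

lemma conv_eval {i : ℕ} (hi : i < p ^ n) (z z' : Module.Dual K (TruncAlg K p n)) :
    conv K p n r f z z' ((tt) ^ i) = pairMap z z' (Delta_t K p n r f ^ i) := by
  rw [conv_apply']
  congr 1
  rw [show ((tt) ^ i) = tbasis K p n ⟨i, hi⟩ from (tbasis_apply ⟨i, hi⟩).symm,
    DeltaMap, Module.Basis.constr_basis]

lemma conv_bnd {z z' : Module.Dual K (TruncAlg K p n)} {A₀ B₀ : ℕ}
    (hz : Bnd z A₀) (hz' : Bnd z' B₀) : Bnd (conv K p n r f z z') (A₀ + B₀) := by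
  intro a ha
  rcases lt_or_ge a (p ^ n) with h | h
  · rw [conv_eval h]
    exact pairMap_vanish hz hz' (Fil_antitone (by omega) (pow_mem_Fil Delta_mem a))
  · rw [tgen_pow_eq_zero h, map_zero]

lemma conv_lead {z z' : Module.Dual K (TruncAlg K p n)} {A₀ B₀ : ℕ}
    (hz : Bnd z A₀) (hz' : Bnd z' B₀) (h : A₀ + B₀ < p ^ n) :
    conv K p n r f z z' ((tt) ^ (A₀ + B₀)) =
      ((A₀ + B₀).choose A₀ : K) * (z ((tt) ^ A₀) * z' ((tt) ^ B₀)) := by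
  rw [conv_eval h]
  have hsplit : Delta_t K p n r f ^ (A₀ + B₀) = Wel K p n ^ (A₀ + B₀) +
      (Delta_t K p n r f ^ (A₀ + B₀) - Wel K p n ^ (A₀ + B₀)) := by ring
  rw [hsplit, map_add, pairMap_vanish hz hz' (Delta_pow_sub_Wel_pow_mem _), add_zero,
    pairMap_Wel_lead hz hz']

/-! Lucas-type binomial lemmas -/

lemma lucas_cast [Fact p.Prime] (a b : ℕ) :
    ((a.choose b : ZMod p)) =
      ((a % p).choose (b % p) : ZMod p) * ((a / p).choose (b / p) : ZMod p) := by
  have h := Choose.choose_modEq_choose_mod_mul_choose_div_nat (p := p) (n := a) (k := b)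
  rw [← ZMod.natCast_eq_natCast_iff] at h
  rw [h, Nat.cast_mul]

lemma lucas_pow_mul [Fact p.Prime] (m k : ℕ) :
    (((k + 1) * p ^ m).choose (k * p ^ m) : ZMod p) = ((k + 1 : ℕ) : ZMod p) := by
  induction m with
  | zero => simp [Nat.choose_succ_self_right]
  | succ m ih =>
      have hp : 0 < p := (Fact.out : p.Prime).pos
      have e1 : (k + 1) * p ^ (m + 1) = ((k + 1) * p ^ m) * p := by ring
      have e2 : k * p ^ (m + 1) = (k * p ^ m) * p := by ring
      rw [lucas_cast, e1, e2, Nat.mul_mod_left, Nat.mul_mod_left,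
        Nat.mul_div_cancel _ hp, Nat.mul_div_cancel _ hp]
      simpa using ih

lemma lucas_add_high [Fact p.Prime] : ∀ (m N j : ℕ), N < p ^ m →
    ((N + j * p ^ m).choose N : ZMod p) = 1 := by
  intro m
  induction m with
  | zero =>
      intro N j hN
      have hN0 : N = 0 := by simpa using hN
      subst hN0
      simp
  | succ m ih =>
      intro N j hN
      have hp : 0 < p := (Fact.out : p.Prime).pos
      have e1 : N + j * p ^ (m + 1) = N + (j * p ^ m) * p := by ring
      rw [lucas_cast, e1, Nat.add_mul_mod_self_right, Nat.add_mul_div_right _ _ hp,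
        Nat.choose_self, Nat.cast_one, one_mul]
      have hdiv : N / p < p ^ m := Nat.div_lt_of_lt_mul (by rw [← pow_succ']; exact hN)
      exact ih (N / p) j hdiv

/-! inductive description of `convPow` and `zprod` -/

lemma convPow_spec [Fact p.Prime] {m : ℕ} (hm : m < n) :
    ∀ k : ℕ, k < p →
    Bnd (convPow K p n r f (zdual K p n (p ^ m)) k) (k * p ^ m) ∧
    ∃ c : ℕ, ((c : ZMod p) ≠ 0 ∧
      convPow K p n r f (zdual K p n (p ^ m)) k ((tt) ^ (k * p ^ m)) = (c : K)) := by
  have hp1 : 1 < p := (Fact.out : p.Prime).one_lt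
  have hpn : 0 < p ^ n := pow_pos (by omega) n
  have hmn : p ^ m < p ^ n := Nat.pow_lt_pow_right hp1 hm
  intro k
  induction k with
  | zero =>
      intro _
      constructor
      · show Bnd (zdual K p n 0) (0 * p ^ m)
        rw [zero_mul]
        exact zdual_bnd hpn
      · refine ⟨1, by simp, ?_⟩
        show zdual K p n 0 ((tt) ^ (0 * p ^ m)) = ((1 : ℕ) : K)
        rw [zero_mul, zdual_apply hpn hpn, if_pos rfl, Nat.cast_one]
  | succ k ih =>
      intro hk
      obtain ⟨hbnd, c, hc, hval⟩ := ih (by omega)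
      have hzb : Bnd (zdual K p n (p ^ m)) (p ^ m) := zdual_bnd hmn
      have hsum : k * p ^ m + p ^ m < p ^ n := by
        have h3 : 0 < p ^ m := pow_pos (by omega) m
        have h5 : (k + 1) * p ^ m < p * p ^ m := (Nat.mul_lt_mul_right h3).2 (by omega)
        have h6 : p * p ^ m = p ^ (m + 1) := (pow_succ' p m).symm
        have h7 : p ^ (m + 1) ≤ p ^ n := Nat.pow_le_pow_right (by omega) (by omega)
        have h8 : (k + 1) * p ^ m = k * p ^ m + p ^ m := by ring
        omega
      constructor
      · show Bnd (conv K p n r f _ _) ((k + 1) * p ^ m)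
        rw [show (k + 1) * p ^ m = k * p ^ m + p ^ m by ring]
        exact conv_bnd hbnd hzb
      · refine ⟨(k * p ^ m + p ^ m).choose (k * p ^ m) * c, ?_, ?_⟩
        · rw [Nat.cast_mul]
          apply mul_ne_zero _ hc
          rw [show k * p ^ m + p ^ m = (k + 1) * p ^ m by ring, lucas_pow_mul]
          intro h0
          have hd := (ZMod.natCast_eq_zero_iff _ _).1 h0
          have := Nat.le_of_dvd (by omega) hd
          omega
        · show conv K p n r f _ _ ((tt) ^ ((k + 1) * p ^ m)) = _
          rw [show (k + 1) * p ^ m = k * p ^ m + p ^ m by ring,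
            conv_lead hbnd hzb hsum, hval, zdual_apply hmn hmn, if_pos rfl]
          push_cast
          ring

lemma zprod_spec [Fact p.Prime] (j : ℕ → ℕ) (hj : ∀ s, j s < p) :
    ∀ m, m ≤ n →
    (∑ s ∈ Finset.range m, j s * p ^ s) < p ^ m ∧
    Bnd (zprod K p n r f j m) (∑ s ∈ Finset.range m, j s * p ^ s) ∧
    ∃ c : ℕ, ((c : ZMod p) ≠ 0 ∧
      zprod K p n r f j m ((tt) ^ (∑ s ∈ Finset.range m, j s * p ^ s)) = (c : K)) := by
  have hp1 : 1 < p := (Fact.out : p.Prime).one_lt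
  have hpn : 0 < p ^ n := pow_pos (by omega) n
  intro m
  induction m with
  | zero =>
      intro _
      refine ⟨by simpa using Nat.one_pos, ?_, 1, by simp, ?_⟩
      · show Bnd (zdual K p n 0) (∑ s ∈ Finset.range 0, j s * p ^ s)
        rw [Finset.sum_range_zero]
        exact zdual_bnd hpn
      · show zdual K p n 0 ((tt) ^ (∑ s ∈ Finset.range 0, j s * p ^ s)) = ((1 : ℕ) : K)
        rw [Finset.sum_range_zero, zdual_apply hpn hpn, if_pos rfl, Nat.cast_one]
  | succ m ih =>
      intro hmn
      have hjm : j m < p := hj m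
      have hmn' : m < n := by omega
      obtain ⟨hNlt, hbnd, c, hc, hval⟩ := ih (by omega)
      obtain ⟨hbnd', c', hc', hval'⟩ := convPow_spec (K := K) (p := p) (n := n) (r := r) (f := f) (m := m) hmn' (j m) hjm
      set N := ∑ s ∈ Finset.range m, j s * p ^ s with hNdef
      have hsum : ∑ s ∈ Finset.range (m + 1), j s * p ^ s = N + j m * p ^ m :=
        Finset.sum_range_succ _ _
      have hNlt' : N + j m * p ^ m < p ^ (m + 1) := by
        have h1 : j m * p ^ m ≤ (p - 1) * p ^ m := Nat.mul_le_mul_right _ (by omega)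
        have h2 : p ^ (m + 1) = p * p ^ m := by rw [pow_succ']
        have h3 : 0 < p ^ m := pow_pos (by omega) _
        nlinarith [hNlt]
      have hlt_n : N + j m * p ^ m < p ^ n := by
        calc N + j m * p ^ m < p ^ (m + 1) := hNlt'
        _ ≤ p ^ n := Nat.pow_le_pow_right (by omega) hmn
      refine ⟨by rw [hsum]; exact hNlt', ?_, ?_⟩
      · show Bnd (conv K p n r f _ _) _
        rw [hsum]
        exact conv_bnd hbnd hbnd'
      · refine ⟨(N + j m * p ^ m).choose N * (c * c'), ?_, ?_⟩
        · rw [Nat.cast_mul, Nat.cast_mul]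
          refine mul_ne_zero ?_ (mul_ne_zero hc hc')
          rw [lucas_add_high m N (j m) hNlt]
          exact one_ne_zero
        · show conv K p n r f _ _ ((tt) ^ (∑ s ∈ Finset.range (m + 1), j s * p ^ s)) = _
          rw [hsum, conv_lead hbnd hbnd' hlt_n, hval, hval']
          push_cast
          ring

lemma tri_basis {K : Type} [Field K] {ι M : Type} [Fintype ι] [LinearOrder ι]
    [DecidableEq ι] [AddCommGroup M] [Module K M] (e : Module.Basis ι K M) (w : ι → M)
    (htri : (e.toMatrix w).BlockTriangular id) (hdiag : ∀ i, e.toMatrix w i i ≠ 0) :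
    LinearIndependent K w ∧ Submodule.span K (Set.range w) = ⊤ := by
  apply (Module.Basis.is_basis_iff_det e).2
  rw [Module.Basis.det_apply, Matrix.det_of_upperTriangular htri]
  exact (Finset.prod_ne_zero_iff.2 fun k _ => hdiag k).isUnit

end Aux

set_option maxHeartbeats 1600000 in
set_option synthInstance.maxHeartbeats 1000000 in
/-- The convolution products
`z_1^{j_0}·z_p^{j_1}·⋯·z_{p^{n-1}}^{j_{n-1}}`, `0 ≤ j_s ≤ p-1`, form a `K`-basis of
`H = H_{n,r,f}^*`; in particular the `z_{p^s}` generate `H` as a `K`-algebra. -/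
theorem zprod_isBasis
    (p : ℕ) [Fact p.Prime] (F : Type) [Field F] [Fintype F] [CharP F p]
    (n r : ℕ) (hr : 0 < r) (hrn : r < n) (hn2r : n ≤ 2 * r)
    (f : LaurentSeries F) (hf : f ≠ 0) :
    LinearIndependent (LaurentSeries F)
      (fun j : Fin n → Fin p =>
        zprod (LaurentSeries F) p n r f (fun s => if h : s < n then (j ⟨s, h⟩ : ℕ) else 0) n) ∧
    Submodule.span (LaurentSeries F)
      (Set.range (fun j : Fin n → Fin p =>
        zprod (LaurentSeries F) p n r f (fun s => if h : s < n then (j ⟨s, h⟩ : ℕ) else 0) n))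
      = ⊤ := by
  classical
  haveI : CharP (LaurentSeries F) p :=
    charP_of_injective_algebraMap (algebraMap F (LaurentSeries F)).injective p
  have hp1 : 1 < p := (Fact.out : p.Prime).one_lt
  have hpn : 0 < p ^ n := pow_pos (by omega) n
  set v : (Fin n → Fin p) → Module.Dual (LaurentSeries F) (TruncAlg (LaurentSeries F) p n) :=
    fun j => zprod (LaurentSeries F) p n r f
      (fun s => if h : s < n then (j ⟨s, h⟩ : ℕ) else 0) n with hv
  set E : (Fin n → Fin p) ≃ Fin (p ^ n) := finFunctionFinEquiv with hE
  have hNE : ∀ j : Fin n → Fin p,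
      (∑ s ∈ Finset.range n, (if h : s < n then (j ⟨s, h⟩ : ℕ) else 0) * p ^ s) = (E j : ℕ) := by
    intro j
    rw [hE, finFunctionFinEquiv_apply,
      ← Fin.sum_univ_eq_sum_range (fun s => (if h : s < n then (j ⟨s, h⟩ : ℕ) else 0) * p ^ s) n]
    refine Finset.sum_congr rfl fun i _ => ?_
    rw [dif_pos i.isLt, Fin.eta]
  have hspec : ∀ j : Fin n → Fin p,
      Bnd (v j) (E j : ℕ) ∧ ∃ c : ℕ, ((c : ZMod p) ≠ 0 ∧
        v j ((tgen (LaurentSeries F) p n) ^ ((E j : ℕ))) = (c : LaurentSeries F)) := by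
    intro j
    have hjlt : ∀ s, (if h : s < n then (j ⟨s, h⟩ : ℕ) else 0) < p := by
      intro s
      split
      · exact (j _).isLt
      · omega
    obtain ⟨_, hbnd, c, hc, hval⟩ :=
      zprod_spec (K := LaurentSeries F) (p := p) (n := n) (r := r) (f := f) _ hjlt n le_rfl
    rw [hNE j] at hbnd hval
    exact ⟨hbnd, c, hc, hval⟩
  set w : Fin (p ^ n) → Module.Dual (LaurentSeries F) (TruncAlg (LaurentSeries F) p n) :=
    fun k => v (E.symm k) with hw
  set B := (tbasis (LaurentSeries F) p n).dualBasis with hB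
  have htri : (B.toMatrix w).BlockTriangular id := by
    intro i k hik
    rw [Module.Basis.toMatrix_apply, hB, Module.Basis.dualBasis_repr, tbasis_apply]
    have hb := (hspec (E.symm k)).1
    apply hb
    simpa using hik
  have hdiag : ∀ k : Fin (p ^ n), B.toMatrix w k k ≠ 0 := by
    intro k
    rw [Module.Basis.toMatrix_apply, hB, Module.Basis.dualBasis_repr, tbasis_apply]
    obtain ⟨c, hc, hval⟩ := (hspec (E.symm k)).2
    have hEk : ((E (E.symm k) : ℕ)) = (k : ℕ) := by rw [Equiv.apply_symm_apply]
    show v (E.symm k) ((tgen (LaurentSeries F) p n) ^ (k : ℕ)) ≠ 0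
    rw [← hEk, hval]
    intro h0
    exact hc ((ZMod.natCast_eq_zero_iff c p).2
      ((CharP.cast_eq_zero_iff (LaurentSeries F) p c).1 h0))
  obtain ⟨hli, hspan⟩ := tri_basis B w htri hdiag
  have hvw : v = w ∘ E := by
    funext j
    rw [hw]
    simp only [Function.comp_apply, Equiv.symm_apply_apply]
  constructor
  · rw [hvw]
    exact hli.comp E E.injective
  · rw [hvw, E.surjective.range_comp w]
    exact hspan

end
end

section
/- For every s with 0 ≤ s ≤ r-1 and every i with 0 ≤ i ≤ p^n - 1, writing i = Σ_{s=0}^{n-1} i_s p^s in base p, the action of z_{p^s} on x^i is given exactly by z_{p^s}(x^i) = i_s·x^{i - p^s} (where x^{i-p^s} is computed in L, in which x is invertible; in particular z_{p^s}(x^i) = 0 when i_s = 0). -/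
open Polynomial TensorProduct

noncomputable section

/-- The element `α(x) = x⊗1 + 1⊗t + f Σ_{ℓ=1}^{p-1} (1/(ℓ!(p-ℓ)!)) x^{p^r ℓ} ⊗ t^{p^r(p-ℓ)}`
of `L ⊗ H_{n,r,f}`. -/
def alphaEl (K : Type) [Field K] (p n r : ℕ) (f : K)
    (L : Type) [Field L] [Algebra K L] (x : L) : L ⊗[K] TruncAlg K p n :=
  x ⊗ₜ 1 + 1 ⊗ₜ tgen K p n +
    f • ∑ ℓ ∈ Finset.Icc 1 (p - 1),
      pfCoeff K p ℓ • ((x ^ (p ^ r * ℓ)) ⊗ₜ[K] (tgen K p n ^ (p ^ r * (p - ℓ))))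

/-- The coaction `α : L → L ⊗ H_{n,r,f}` as a linear map, determined by `α(x^i) = α(x)^i`
(it is the unique `K`-algebra map with `x ↦ α(x)`). -/
def alphaMap (K : Type) [Field K] (p n r : ℕ) (f : K)
    (L : Type) [Field L] [Algebra K L] (x : L) (bL : Module.Basis (Fin (p ^ n)) K L) :
    L →ₗ[K] L ⊗[K] TruncAlg K p n :=
  bL.constr K fun i => (alphaEl K p n r f L x) ^ (i : ℕ)

/-- The action of `h ∈ H = H_{n,r,f}^*` on `L`:  `h(y) = (mult ∘ (1 ⊗ h))(α(y))`. -/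
def hact (K : Type) [Field K] (p n r : ℕ) (f : K)
    (L : Type) [Field L] [Algebra K L] (x : L) (bL : Module.Basis (Fin (p ^ n)) K L)
    (h : Module.Dual K (TruncAlg K p n)) : L →ₗ[K] L :=
  (TensorProduct.rid K L).toLinearMap ∘ₗ (TensorProduct.map LinearMap.id h) ∘ₗ
    alphaMap K p n r f L x bL

/-- The fractional ideal `𝔓_L^h = {y ∈ L : v_L(y) ≥ h}`. -/
def fracIdeal (L : Type) [Zero L] (vL : L → ℤ) (h : ℤ) : Set L :=
  {y | y ≠ 0 → h ≤ vL y}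

/-- The `s`-th base-`p` digit of a natural number. -/
def digit (p i s : ℕ) : ℕ := i / p ^ s % p

/-- `res(m)`: the least nonnegative residue of `m` modulo `N`. -/
def resZ (N : ℕ) (m : ℤ) : ℤ := m % (N : ℤ)

/-- The `s`-th base-`p` digit of an integer (intended: of a least nonnegative residue). -/
def digitZ (p : ℕ) (m : ℤ) (s : ℕ) : ℤ := m / (p : ℤ) ^ s % (p : ℤ)

/-- The uniformizer `T` of `K = F_q((T))`. -/
def Tvar (F : Type) [Field F] : LaurentSeries F := HahnSeries.single (1 : ℤ) (1 : F)

/-- The scaffold element `λ_j = T^{(j + b·res(aj))/p^n} x^{res(aj)}`. -/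
def lam (F : Type) [Field F] (p n : ℕ) (a b : ℤ)
    (L : Type) [Field L] [Algebra (LaurentSeries F) L] (x : L) (j : ℤ) : L :=
  algebraMap (LaurentSeries F) L
      (Tvar F ^ ((j + b * resZ (p ^ n) (a * j)) / ((p : ℤ) ^ n))) *
    x ^ (resZ (p ^ n) (a * j)).toNat

section Aux

lemma tgen_pow (K : Type) [Field K] (p n : ℕ) : tgen K p n ^ p ^ n = 0 := by
  have : tgen K p n = AdjoinRoot.mk _ X := rfl
  rw [this, ← map_pow, AdjoinRoot.mk_self]

lemma tbasis_apply_s6 (K : Type) [Field K] (p n m : ℕ) (h : m < p ^ n) :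
    tbasis K p n ⟨m, h⟩ = tgen K p n ^ m := by
  rw [tbasis, Module.Basis.reindex_apply, PowerBasis.basis_eq_pow]
  rfl

lemma zdual_tpow (K : Type) [Field K] (p n j m : ℕ) (hj : j < p ^ n) :
    zdual K p n j (tgen K p n ^ m) = if m = j then 1 else 0 := by
  rw [zdual, dif_pos hj]
  by_cases hm : m < p ^ n
  · rw [← tbasis_apply_s6 K p n m hm, Module.Basis.coord_apply, Module.Basis.repr_self,
      Finsupp.single_apply]
    simp [Fin.ext_iff, eq_comm]
  · have : tgen K p n ^ m = 0 := by
      obtain ⟨k, rfl⟩ := Nat.exists_eq_add_of_le (Nat.le_of_not_lt hm)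
      rw [pow_add, tgen_pow, zero_mul]
    rw [this, map_zero, if_neg]
    omega

lemma choose_pow_modEq (p : ℕ) [hp : Fact p.Prime] (i s : ℕ) :
    Nat.choose i (p ^ s) ≡ i / p ^ s % p [MOD p] := by
  induction s generalizing i with
  | zero => simpa using (Nat.ModEq.refl i).symm.trans (Nat.mod_modEq i p).symm
  | succ s ih =>
    have h1 : (Nat.choose i (p ^ (s+1)) : ℕ) ≡
        Nat.choose (i % p) (p ^ (s+1) % p) * Nat.choose (i / p) (p ^ (s+1) / p) [MOD p] :=
      Choose.choose_modEq_choose_mod_mul_choose_div_nat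
    have hp0 : 0 < p := hp.out.pos
    have h2 : p ^ (s+1) % p = 0 := by
      simp [pow_succ, Nat.mul_mod_left]
    have h3 : p ^ (s+1) / p = p ^ s := by
      rw [pow_succ, Nat.mul_div_cancel _ hp0]
    rw [h2, h3, Nat.choose_zero_right, one_mul] at h1
    refine h1.trans ((ih (i / p)).trans ?_)
    rw [Nat.div_div_eq_div_mul, ← pow_succ']

lemma zdual_mul_high (K : Type) [Field K] (p n s e : ℕ) (hse : p ^ s < e)
    (hsn : p ^ s < p ^ n) (h : TruncAlg K p n) :
    zdual K p n (p ^ s) (h * tgen K p n ^ e) = 0 := by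
  have key : (zdual K p n (p ^ s)).comp
      (LinearMap.mulRight K (tgen K p n ^ e)) = 0 := by
    apply (tbasis K p n).ext
    rintro ⟨m, hm⟩
    rw [tbasis_apply_s6]
    simp only [LinearMap.comp_apply, LinearMap.mulRight_apply, LinearMap.zero_apply,
      ← pow_add]
    rw [zdual_tpow _ _ _ _ _ hsn, if_neg (by omega)]
  simpa using congrFun (congrArg DFunLike.coe key) h

lemma phi_mul_high (K : Type) [Field K] (p n s e : ℕ) (hse : p ^ s < e)
    (hsn : p ^ s < p ^ n) (L : Type) [Field L] [Algebra K L]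
    (u : L ⊗[K] TruncAlg K p n) :
    (TensorProduct.rid K L).toLinearMap
      ((TensorProduct.map LinearMap.id (zdual K p n (p ^ s)))
        (u * (1 : L) ⊗ₜ[K] (tgen K p n ^ e))) = 0 := by
  induction u using TensorProduct.induction_on with
  | zero => simp
  | tmul y h =>
    rw [Algebra.TensorProduct.tmul_mul_tmul, TensorProduct.map_tmul,
      zdual_mul_high K p n s e hse hsn]
    simp
  | add u v hu hv =>
    rw [add_mul, map_add, map_add, hu, hv, add_zero]

lemma alphaEl_sub_mem (K : Type) [Field K] (p n r : ℕ) (f : K)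
    (L : Type) [Field L] [Algebra K L] (x : L) :
    alphaEl K p n r f L x - (x ⊗ₜ 1 + 1 ⊗ₜ tgen K p n) ∈
      Ideal.span {((1 : L) ⊗ₜ[K] (tgen K p n ^ p ^ r) : L ⊗[K] TruncAlg K p n)} := by
  rw [alphaEl, add_sub_cancel_left, Algebra.smul_def]
  refine Ideal.mul_mem_left _ _ (Submodule.sum_mem _ fun ℓ hℓ => ?_)
  rw [Finset.mem_Icc] at hℓ
  rw [Algebra.smul_def]
  refine Ideal.mul_mem_left _ _ ?_
  rw [Ideal.mem_span_singleton]
  refine ⟨(x ^ (p ^ r * ℓ)) ⊗ₜ[K] (tgen K p n ^ (p ^ r * (p - ℓ) - p ^ r)), ?_⟩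
  rw [Algebra.TensorProduct.tmul_mul_tmul, one_mul, ← pow_add]
  congr 2
  have h2 : p ^ r ≤ p ^ r * (p - ℓ) := Nat.le_mul_of_pos_right _ (by omega)
  omega

lemma pow_sub_pow_mem {R : Type} [CommRing R] {a d : R} {I : Ideal R}
    (h : a - d ∈ I) (i : ℕ) : a ^ i - d ^ i ∈ I := by
  have h1 : Ideal.Quotient.mk I a = Ideal.Quotient.mk I d := by
    rwa [Ideal.Quotient.mk_eq_mk_iff_sub_mem]
  have h2 : Ideal.Quotient.mk I (a ^ i) = Ideal.Quotient.mk I (d ^ i) := by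
    rw [map_pow, map_pow, h1]
  rwa [Ideal.Quotient.mk_eq_mk_iff_sub_mem] at h2

end Aux

set_option maxHeartbeats 2000000 in
/-- For `0 ≤ s ≤ r-1` and `0 ≤ i ≤ p^n-1`, writing `i_s` for the `s`-th
base-`p` digit of `i`, the action of `z_{p^s}` on `x^i` is `z_{p^s}(x^i) = i_s·x^{i-p^s}`. -/
theorem zdual_act_on_xpow_low
    (p : ℕ) [Fact p.Prime] (F : Type) [Field F] [Fintype F] [CharP F p]
    (n r : ℕ) (hr : 0 < r) (hrn : r < n) (hn2r : n ≤ 2 * r)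
    (f : LaurentSeries F) (hf : f ≠ 0)
    (L : Type) [Field L] [Algebra (LaurentSeries F) L]
    (β : LaurentSeries F) (b : ℤ) (hb : 0 < b) (hpb : ¬ (p : ℤ) ∣ b)
    (hβ : β ≠ 0) (hordβ : β.order = -b)
    (x : L) (hx : x ^ p ^ n = algebraMap (LaurentSeries F) L β)
    (bL : Module.Basis (Fin (p ^ n)) (LaurentSeries F) L)
    (hbL : ∀ i : Fin (p ^ n), bL i = x ^ (i : ℕ))
    (vL : L → ℤ)
    (hvmul : ∀ y z : L, y ≠ 0 → z ≠ 0 → vL (y * z) = vL y + vL z)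
    (hvadd : ∀ y z : L, y ≠ 0 → z ≠ 0 → y + z ≠ 0 → min (vL y) (vL z) ≤ vL (y + z))
    (hvK : ∀ c : LaurentSeries F, c ≠ 0 →
      vL (algebraMap (LaurentSeries F) L c) = (p : ℤ) ^ n * c.order) :
    ∀ s : ℕ, s < r → ∀ i : ℕ, i ≤ p ^ n - 1 →
      hact (LaurentSeries F) p n r f L x bL (zdual (LaurentSeries F) p n (p ^ s)) (x ^ i)
        = (digit p i s : LaurentSeries F) • (x ^ ((i : ℤ) - (p : ℤ) ^ s)) := by
  intro s hs i hi
  haveI : CharP (LaurentSeries F) p := charP_of_injective_algebraMap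
    (algebraMap F (LaurentSeries F)).injective p
  have hp : p.Prime := Fact.out
  have hp1 : 1 < p := hp.one_lt
  have hpn : 0 < p ^ n := pow_pos hp.pos n
  have hin : i < p ^ n := by omega
  have hsr : p ^ s < p ^ r := Nat.pow_lt_pow_right hp1 hs
  have hsn : p ^ s < p ^ n := Nat.pow_lt_pow_right hp1 (lt_trans hs hrn)
  set z : Module.Dual (LaurentSeries F) (TruncAlg (LaurentSeries F) p n) :=
    zdual (LaurentSeries F) p n (p ^ s) with hz
  set Phi : L ⊗[LaurentSeries F] TruncAlg (LaurentSeries F) p n →ₗ[LaurentSeries F] L :=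
    (TensorProduct.rid (LaurentSeries F) L).toLinearMap ∘ₗ
      (TensorProduct.map LinearMap.id z) with hPhi
  -- unfold the action
  have hxi : x ^ i = bL ⟨i, hin⟩ := (hbL ⟨i, hin⟩).symm
  have hact_eq : hact (LaurentSeries F) p n r f L x bL z (x ^ i)
      = Phi ((alphaEl (LaurentSeries F) p n r f L x) ^ i) := by
    rw [hact, hxi, LinearMap.comp_apply, LinearMap.comp_apply, alphaMap,
      Module.Basis.constr_basis]
    rfl
  -- replace alphaEl by the low-degree part D
  set D : L ⊗[LaurentSeries F] TruncAlg (LaurentSeries F) p n :=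
    x ⊗ₜ 1 + 1 ⊗ₜ tgen (LaurentSeries F) p n with hD
  have hmem := pow_sub_pow_mem (alphaEl_sub_mem (LaurentSeries F) p n r f L x) i
  rw [Ideal.mem_span_singleton] at hmem
  obtain ⟨w, hw⟩ := hmem
  have hPhiD : Phi ((alphaEl (LaurentSeries F) p n r f L x) ^ i) = Phi (D ^ i) := by
    have heq : (alphaEl (LaurentSeries F) p n r f L x) ^ i = D ^ i
        + w * ((1 : L) ⊗ₜ[LaurentSeries F] (tgen (LaurentSeries F) p n ^ p ^ r)) := by
      rw [mul_comm] at hw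
      linear_combination hw
    have h0 : Phi (w * ((1 : L) ⊗ₜ[LaurentSeries F] (tgen (LaurentSeries F) p n ^ p ^ r)))
        = 0 := phi_mul_high (LaurentSeries F) p n s (p ^ r) hsr hsn L w
    rw [heq, map_add, h0, add_zero]
  -- binomial expansion of D ^ i
  have hterm : ∀ k, (x ⊗ₜ[LaurentSeries F] (1 : TruncAlg (LaurentSeries F) p n)) ^ k *
        ((1 : L) ⊗ₜ[LaurentSeries F] tgen (LaurentSeries F) p n) ^ (i - k)
      = (x ^ k) ⊗ₜ[LaurentSeries F] (tgen (LaurentSeries F) p n ^ (i - k)) := by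
    intro k
    rw [Algebra.TensorProduct.tmul_pow, Algebra.TensorProduct.tmul_pow,
      Algebra.TensorProduct.tmul_mul_tmul, one_pow, one_pow, mul_one, one_mul]
  have hPhiterm : ∀ k, Phi ((x ^ k) ⊗ₜ[LaurentSeries F] (tgen (LaurentSeries F) p n ^ (i - k)))
      = (if i - k = p ^ s then (1 : LaurentSeries F) else 0) • x ^ k := by
    intro k
    rw [hPhi, LinearMap.comp_apply, TensorProduct.map_tmul, LinearMap.id_apply, hz,
      zdual_tpow (LaurentSeries F) p n (p ^ s) (i - k) hsn]
    exact TensorProduct.rid_tmul _ _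
  have hsum : Phi (D ^ i) = ∑ k ∈ Finset.range (i + 1),
      ((i.choose k : ℕ) : LaurentSeries F) •
        ((if i - k = p ^ s then (1 : LaurentSeries F) else 0) • x ^ k) := by
    rw [hD, add_pow, map_sum]
    refine Finset.sum_congr rfl fun k _ => ?_
    have hsm : ((x ^ k) ⊗ₜ[LaurentSeries F] (tgen (LaurentSeries F) p n ^ (i - k))) *
          ((i.choose k : ℕ) : L ⊗[LaurentSeries F] TruncAlg (LaurentSeries F) p n)
        = ((i.choose k : ℕ) : LaurentSeries F) •
          ((x ^ k) ⊗ₜ[LaurentSeries F] (tgen (LaurentSeries F) p n ^ (i - k))) := by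
      rw [mul_comm, show ((i.choose k : ℕ) : L ⊗[LaurentSeries F] TruncAlg (LaurentSeries F) p n)
          = ((i.choose k : ℕ) : LaurentSeries F) •
            (1 : L ⊗[LaurentSeries F] TruncAlg (LaurentSeries F) p n) by
        rw [← map_natCast (algebraMap (LaurentSeries F)
          (L ⊗[LaurentSeries F] TruncAlg (LaurentSeries F) p n)) (i.choose k),
          Algebra.algebraMap_eq_smul_one], smul_mul_assoc, one_mul]
    rw [hterm k, hsm, map_smul, hPhiterm k]
  by_cases hps : p ^ s ≤ i
  · have hdig : (digit p i s : LaurentSeries F) = ((i.choose (p ^ s) : ℕ) : LaurentSeries F) :=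
      (CharP.natCast_eq_natCast' (LaurentSeries F) p (choose_pow_modEq p i s)).symm
    have hzpow : x ^ ((i : ℤ) - (p : ℤ) ^ s) = x ^ (i - p ^ s) := by
      rw [show (i : ℤ) - (p : ℤ) ^ s = ((i - p ^ s : ℕ) : ℤ) by push_cast [hps]; ring,
        zpow_natCast]
    rw [hact_eq, hPhiD, hsum, Finset.sum_eq_single (i - p ^ s)]
    · rw [if_pos (by omega)]
      have h1 : (1 : LaurentSeries F) • x ^ (i - p ^ s) = x ^ (i - p ^ s) :=
        one_smul (LaurentSeries F) (x ^ (i - p ^ s))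
      rw [h1, hzpow, Nat.choose_symm hps, hdig]
    · intro k hk hne
      rw [Finset.mem_range] at hk
      have h0 : (0 : LaurentSeries F) • x ^ k = 0 := zero_smul (LaurentSeries F) (x ^ k)
      have h0' : ((i.choose k : ℕ) : LaurentSeries F) • (0 : L) = 0 :=
        smul_zero ((i.choose k : ℕ) : LaurentSeries F)
      rw [if_neg (by omega), h0, h0']
    · intro h
      exact absurd (Finset.mem_range.mpr (by omega)) h
  · have hdig : digit p i s = 0 := by
      rw [digit, Nat.div_eq_of_lt (by omega), Nat.zero_mod]
    have h2 : (0 : LaurentSeries F) • x ^ ((i : ℤ) - (p : ℤ) ^ s) = 0 :=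
      zero_smul (LaurentSeries F) (x ^ ((i : ℤ) - (p : ℤ) ^ s))
    rw [hact_eq, hPhiD, hsum, hdig, Nat.cast_zero, h2]
    refine Finset.sum_eq_zero fun k hk => ?_
    rw [Finset.mem_range] at hk
    have h0 : (0 : LaurentSeries F) • x ^ k = 0 := zero_smul (LaurentSeries F) (x ^ k)
    have h0' : ((i.choose k : ℕ) : LaurentSeries F) • (0 : L) = 0 :=
      smul_zero ((i.choose k : ℕ) : LaurentSeries F)
    rw [if_neg (by omega), h0, h0']

end
end
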